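/- Let κ be a measurable cardinal, U a non-principal κ-complete ultrafilter on κ, and j : V → M the ultrapower elementary embedding by U. Let W be a non-principal κ-complete ultrafilter on κ with ultrapower embedding j_W : V → M_W, and suppose U ◁ W, i.e. U ∈ M_W. Then there is an ordinal α < (2^κ)⁺ such that j_W(α) > α = j(α). -/

import Mathlib

open Cardinal Set

universe u

/-- An ideal of subsets of `ι`: a proper, downward closed family of subsets of `ι`
containing `∅` and closed under binary unions. -/
structure SetIdeal (ι : Type u) : Type u where
  sets : Set (Set ι)
  empty_mem : ∅ ∈ sets
  mem_of_subset : ∀ ⦃A B : Set ι⦄, A ⊆ B → B ∈ sets → A ∈ sets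
  union_mem : ∀ ⦃A B : Set ι⦄, A ∈ sets → B ∈ sets → A ∪ B ∈ sets
  univ_not_mem : Set.univ ∉ sets

instance {ι : Type u} : Membership (Set ι) (SetIdeal ι) :=
  ⟨fun J A => A ∈ J.sets⟩

/-- The ideal `J` is `κ`-complete: it is closed under unions of fewer than `κ` of
its members. -/
def SetIdeal.IsComplete {ι : Type u} (J : SetIdeal ι) (κ : Cardinal.{u}) : Prop :=
  ∀ S : Set (Set ι), #S < κ → (∀ A ∈ S, A ∈ J) → ⋃₀ S ∈ J

/-- `g < h` modulo the ideal `J` (the set where it fails belongs to `J`). -/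
def SetIdeal.ltMod {ι : Type u} (J : SetIdeal ι) (g h : ι → Ordinal.{0}) : Prop :=
  {i | h i ≤ g i} ∈ J

/-- `lam` is the true cofinality of the product `∏ i, f i` ordered by `<` modulo `J`:
`lam` is regular and there is a `<_J`-increasing sequence of length `lam` which is
cofinal in the product. -/
def IsTcf {ι : Type u} (J : SetIdeal ι) (f : ι → Ordinal.{0}) (lam : Cardinal.{0}) : Prop :=
  lam.IsRegular ∧
  ∃ F : lam.ord.ToType → ι → Ordinal.{0},
    (∀ β i, F β i < f i) ∧
    (∀ β γ, β < γ → J.ltMod (F β) (F γ)) ∧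
    ∀ g : ι → Ordinal.{0}, (∀ i, g i < f i) → ∃ β, J.ltMod g (F β)

/-- `lam` is the true cofinality of `∏ i, f i` modulo the ideal `J^bd` of bounded
subsets of `ι`. -/
def IsTcfBdd {ι : Type u} [Preorder ι] (f : ι → Ordinal.{0}) (lam : Cardinal.{0}) : Prop :=
  lam.IsRegular ∧
  ∃ F : lam.ord.ToType → ι → Ordinal.{0},
    (∀ β i, F β i < f i) ∧
    (∀ β γ, β < γ → BddAbove {i | F γ i ≤ F β i}) ∧
    ∀ g : ι → Ordinal.{0}, (∀ i, g i < f i) → ∃ β, BddAbove {i | F β i ≤ g i}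

/-- `pcf_{σ-complete}(𝔞)`: the set of true cofinalities of `∏ 𝔞` modulo `σ`-complete
ideals on `𝔞`. -/
def pcfCompl (σ : Cardinal.{0}) (𝔞 : Set Cardinal.{0}) : Set Cardinal.{0} :=
  { lam | ∃ J : SetIdeal ↥𝔞, J.IsComplete (Cardinal.lift.{1} σ) ∧
      IsTcf J (fun a => (a : Cardinal).ord) lam }

/-- `pcf(𝔞)`: the set of true cofinalities of `∏ 𝔞` modulo ideals on `𝔞`. -/
def pcfSet (𝔞 : Set Cardinal.{0}) : Set Cardinal.{0} :=
  { lam | ∃ J : SetIdeal ↥𝔞, IsTcf J (fun a => (a : Cardinal).ord) lam }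

/-- The set of cardinals realized as true cofinalities in the definition of
`pp_{Γ(κ)}(μ)`: true cofinalities of `∏ 𝔞 / J` where `𝔞` is a set of `κ` regular
cardinals unbounded in `μ` and `J` is a `κ`-complete ideal on `𝔞` extending the
ideal of bounded subsets of `𝔞`. -/
def ppSet (κ μ : Cardinal.{0}) : Set Cardinal.{0} :=
  { lam | ∃ 𝔞 : Set Cardinal.{0},
      (∀ a ∈ 𝔞, (a : Cardinal).IsRegular) ∧
      #↥𝔞 = Cardinal.lift.{1} κ ∧
      (∀ a ∈ 𝔞, a < μ) ∧
      (∀ b, b < μ → ∃ a ∈ 𝔞, b < a) ∧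
      ∃ J : SetIdeal ↥𝔞,
        J.IsComplete (Cardinal.lift.{1} κ) ∧
        (∀ A : Set ↥𝔞, BddAbove A → A ∈ J) ∧
        IsTcf J (fun a => (a : Cardinal).ord) lam }

/-- `pp_{Γ(κ)}(μ)`. -/
noncomputable def ppGamma (κ μ : Cardinal.{0}) : Cardinal.{0} := sSup (ppSet κ μ)

/-- `pp⁺_{Γ(κ)}(μ)`: the least regular cardinal which is not realized as one of the
true cofinalities in the definition of `pp_{Γ(κ)}(μ)`. -/
noncomputable def ppGammaPlus (κ μ : Cardinal.{0}) : Cardinal.{0} :=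
  sInf { lam | lam.IsRegular ∧ lam ∉ ppSet κ μ }

/-- The least singular cardinal `ξ ≤ τ` of cofinality `κ` above `2 ^ κ` such that
`pp_{Γ(κ)}(ξ) ≥ τ` (denoted `μ*`, resp. `τ*`, in the paper). -/
noncomputable def leastPP (κ τ : Cardinal.{0}) : Cardinal.{0} :=
  sInf { ξ | ξ ≤ τ ∧ 2 ^ κ < ξ ∧ ξ.ord.cof = κ ∧ τ ≤ ppGamma κ ξ }

/-- The ultrafilter `U` is `κ`-complete. -/
def UltraComplete {ι : Type} (U : Ultrafilter ι) (κ : Cardinal.{0}) : Prop :=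
  ∀ S : Set (Set ι), #S < κ → (∀ A ∈ S, A ∈ U) → ⋂₀ S ∈ U

/-- The ultrafilter `U` is non-principal. -/
def NonPrincipal {ι : Type} (U : Ultrafilter ι) : Prop :=
  ∀ i : ι, ({i} : Set ι) ∉ U

/-- `r` is the rank function of the (well-founded) ultrapower of the ordinals by `U`:
`r f` is the ordinal represented by `f` in the transitive collapse of `Ord ^ ι / U`.
Equivalently, `r` induces an order isomorphism from `Ord ^ ι / U` onto an initial
segment of the ordinals.  In particular `fun α => r (fun _ => α)` is the restriction
to the ordinals of the ultrapower embedding `j : V → M` by `U`. -/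
def IsUltrapowerRank {ι : Type} (U : Ultrafilter ι)
    (r : (ι → Ordinal.{0}) → Ordinal.{0}) : Prop :=
  (∀ f g : ι → Ordinal.{0}, (r f < r g ↔ {i | f i < g i} ∈ U)) ∧
  ∀ (f : ι → Ordinal.{0}) (β : Ordinal.{0}), β < r f → ∃ g, r g = β

/-- `κ` is weakly compact: uncountable and `κ → (κ)²₂`. -/
def IsWeaklyCompact (κ : Cardinal.{0}) : Prop :=
  ℵ₀ < κ ∧
  ∀ c : κ.ord.ToType → κ.ord.ToType → Bool,
    ∃ (H : Set κ.ord.ToType) (b : Bool), #↥H = κ ∧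
      ∀ x ∈ H, ∀ y ∈ H, x < y → c x y = b

/-- The ordinal corresponding to an element of the canonical type `κ.ord.ToType`. -/
noncomputable def ordVal (κ : Cardinal.{0}) (x : κ.ord.ToType) : Ordinal.{0} :=
  ((Ordinal.ToType.mk (o := κ.ord)).symm x : Set.Iio κ.ord)

namespace MitchellProof

open Ordinal

noncomputable section

variable {κ : Cardinal.{0}}

/-- The ordinal value of an element of `κ.ord.ToType`, abbreviation. -/
def v (κ : Cardinal.{0}) (x : κ.ord.ToType) : Ordinal.{0} := ordVal κ x

lemma v_lt (x : κ.ord.ToType) : v κ x < κ.ord :=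
  (((Ordinal.ToType.mk (o := κ.ord))).symm x).2

lemma v_inj : Function.Injective (v κ) := by
  intro x y h
  have := Subtype.ext (p := fun o => o ∈ Set.Iio κ.ord) h
  exact ((Ordinal.ToType.mk (o := κ.ord))).symm.injective this

/-- Inverse of `v`. -/
def vInv (κ : Cardinal.{0}) (o : Ordinal.{0}) (h : o < κ.ord) : κ.ord.ToType :=
  (Ordinal.ToType.mk (o := κ.ord)) ⟨o, h⟩

lemma v_vInv (o : Ordinal.{0}) (h : o < κ.ord) : v κ (vInv κ o h) = o := by
  show (((Ordinal.ToType.mk (o := κ.ord))).symm ((Ordinal.ToType.mk (o := κ.ord)) ⟨o, h⟩) : Ordinal) = o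
  rw [OrderIso.symm_apply_apply]

lemma v_surj {o : Ordinal.{0}} (h : o < κ.ord) : ∃ x, v κ x = o :=
  ⟨vInv κ o h, v_vInv o h⟩

section Ultra

variable {X : Ultrafilter κ.ord.ToType}

lemma null_of_small (hX1 : NonPrincipal X) (hX2 : UltraComplete X κ)
    {A : Set κ.ord.ToType} (hA : #A < κ) : A ∉ X := by
  intro hmem
  set S : Set (Set κ.ord.ToType) := (fun a => ({a}ᶜ : Set κ.ord.ToType)) '' A with hS
  have hcard : #S < κ := lt_of_le_of_lt Cardinal.mk_image_le hA
  have hall : ∀ B ∈ S, B ∈ X := by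
    rintro B ⟨a, _, rfl⟩
    exact (Ultrafilter.compl_mem_iff_notMem).2 (hX1 a)
  have hint : ⋂₀ S ∈ X := hX2 S hcard hall
  have : (⋂₀ S ∩ A : Set κ.ord.ToType) ∈ X := Filter.inter_mem hint hmem
  have hempty : (⋂₀ S ∩ A : Set κ.ord.ToType) = ∅ := by
    ext x
    simp only [Set.mem_inter_iff, Set.mem_sInter, Set.mem_empty_iff_false, iff_false]
    rintro ⟨hx, hxA⟩
    exact (hx ({x}ᶜ) ⟨x, hxA, rfl⟩) rfl
  rw [hempty] at this
  exact Ultrafilter.empty_notMem this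

lemma null_iUnion (hX1 : NonPrincipal X) (hX2 : UltraComplete X κ)
    {ι : Type} (f : ι → Set κ.ord.ToType) (hι : #ι < κ)
    (h : ∀ i, f i ∉ X) : (⋃ i, f i) ∉ X := by
  intro hmem
  set S : Set (Set κ.ord.ToType) := Set.range (fun i => (f i)ᶜ) with hS
  have hcard : #S < κ := lt_of_le_of_lt Cardinal.mk_range_le hι
  have hall : ∀ B ∈ S, B ∈ X := by
    rintro B ⟨i, rfl⟩
    exact (Ultrafilter.compl_mem_iff_notMem).2 (h i)
  have hint : ⋂₀ S ∈ X := hX2 S hcard hall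
  have heq : ⋂₀ S = (⋃ i, f i)ᶜ := by
    rw [hS, Set.sInter_range]
    rw [Set.compl_iUnion]
  rw [heq] at hint
  exact (Ultrafilter.compl_mem_iff_notMem).1 hint hmem

lemma exists_mem_of_iUnion_mem (hX1 : NonPrincipal X) (hX2 : UltraComplete X κ)
    {ι : Type} (f : ι → Set κ.ord.ToType) (hι : #ι < κ)
    (h : (⋃ i, f i) ∈ X) : ∃ i, f i ∈ X := by
  by_contra hc
  push_neg at hc
  exact null_iUnion hX1 hX2 f hι hc h

/-- Initial segments of `κ.ord.ToType` are small. -/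
lemma card_seg_le (o : Ordinal.{0}) : #{x : κ.ord.ToType | v κ x < o} ≤ o.card := by
  rw [← Cardinal.mk_toType o]
  refine Cardinal.mk_le_of_injective (f := fun x =>
    (Ordinal.ToType.mk (o := o)) ⟨v κ x.1, x.2⟩) ?_
  intro x y hxy
  have := ((Ordinal.ToType.mk (o := o))).injective hxy
  exact Subtype.ext (v_inj (Subtype.mk_eq_mk.1 this))

lemma null_seg (hX1 : NonPrincipal X) (hX2 : UltraComplete X κ)
    {o : Ordinal.{0}} (ho : o < κ.ord) : {x : κ.ord.ToType | v κ x < o} ∉ X :=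
  null_of_small hX1 hX2 (lt_of_le_of_lt (card_seg_le o) (Cardinal.lt_ord.1 ho))

lemma tail_mem (hX1 : NonPrincipal X) (hX2 : UltraComplete X κ)
    {o : Ordinal.{0}} (ho : o < κ.ord) : {x : κ.ord.ToType | o ≤ v κ x} ∈ X := by
  have := (Ultrafilter.compl_mem_iff_notMem (f := X)).2 (null_seg hX1 hX2 ho)
  convert this using 1
  ext x; simp [not_lt]

/-- κ is regular: small sups of small ordinals are < κ.ord. -/
lemma sup_lt_kappa (hX1 : NonPrincipal X) (hX2 : UltraComplete X κ)
    {ι : Type} (f : ι → Ordinal.{0}) (hι : #ι < κ)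
    (h : ∀ i, f i < κ.ord) : (⨆ i, f i) < κ.ord := by
  by_contra hc
  push_neg at hc
  have hcover : (⋃ i, {x : κ.ord.ToType | v κ x < f i}) = Set.univ := by
    ext x
    simp only [Set.mem_iUnion, Set.mem_setOf_eq, Set.mem_univ, iff_true]
    have : v κ x < ⨆ i, f i := lt_of_lt_of_le (v_lt x) hc
    exact (Ordinal.lt_iSup_iff).1 this
  have := null_iUnion hX1 hX2 (fun i => {x : κ.ord.ToType | v κ x < f i}) hι
    (fun i => null_seg hX1 hX2 (h i))
  rw [hcover] at this
  exact this Filter.univ_mem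

/-- κ is a strong limit. -/
lemma two_power_lt (hκ : ℵ₀ < κ) (hX1 : NonPrincipal X) (hX2 : UltraComplete X κ)
    {lam : Cardinal.{0}} (h : lam < κ) : (2 : Cardinal.{0}) ^ lam < κ := by
  by_contra hc
  push_neg at hc
  set L := lam.ord.ToType with hL
  have hmkL : #L = lam := by rw [hL, Cardinal.mk_toType, Cardinal.card_ord]
  have h2 : κ ≤ #(L → Bool) := by
    rw [Cardinal.mk_arrow, Cardinal.mk_bool, hmkL, Cardinal.lift_id, Cardinal.lift_id]
    exact hc
  have h3 : #(κ.ord.ToType) ≤ #(L → Bool) := by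
    rw [Cardinal.mk_toType, Cardinal.card_ord]; exact h2
  obtain ⟨f⟩ := Cardinal.le_def _ _ |>.1 h3
  classical
  set A : L → Set κ.ord.ToType := fun l =>
    if {x | f x l = true} ∈ X then {x | f x l = true} else {x | f x l = false} with hA
  have hAmem : ∀ l, A l ∈ X := by
    intro l
    rw [hA]
    by_cases hl : {x | f x l = true} ∈ X
    · simpa [if_pos hl] using hl
    · have : {x | f x l = false} = {x | f x l = true}ᶜ := by
        ext x; simp [Bool.not_eq_true]
      simpa [if_neg hl, this] using (Ultrafilter.compl_mem_iff_notMem).2 hl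
  have hint : ⋂₀ (Set.range A) ∈ X := by
    refine hX2 _ (lt_of_le_of_lt Cardinal.mk_range_le ?_) ?_
    · rw [hmkL]; exact h
    · rintro B ⟨l, rfl⟩; exact hAmem l
  obtain ⟨x₀, hx₀⟩ := Ultrafilter.nonempty_of_mem hint
  have hsub : ⋂₀ (Set.range A) ⊆ {x₀} := by
    intro y hy
    have hxy : f y = f x₀ := by
      funext l
      have h1 := hy (A l) ⟨l, rfl⟩
      have h2 := hx₀ (A l) ⟨l, rfl⟩
      rw [hA] at h1 h2
      by_cases hl : {x | f x l = true} ∈ X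
      · simp only [if_pos hl, Set.mem_setOf_eq] at h1 h2; rw [h1, h2]
      · simp only [if_neg hl, Set.mem_setOf_eq] at h1 h2; rw [h1, h2]
    exact f.injective hxy
  exact hX1 x₀ (Filter.mem_of_superset hint hsub)

lemma power_lt (hκ : ℵ₀ < κ) (hX1 : NonPrincipal X) (hX2 : UltraComplete X κ)
    {a b : Cardinal.{0}} (ha : a < κ) (hb : b < κ) : a ^ b < κ := by
  rcases eq_or_ne a 0 with rfl | ha0
  · exact lt_of_le_of_lt (Cardinal.zero_power_le b) (lt_trans (by norm_num) hκ)
  set c := max (max a b) ℵ₀ with hc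
  have hcκ : c < κ := by
    rw [hc]
    exact max_lt (max_lt ha hb) hκ
  have h1 : a ^ b ≤ c ^ c := by
    calc a ^ b ≤ c ^ b := Cardinal.power_le_power_right (le_trans (le_max_left _ _) (le_max_left _ _))
    _ ≤ c ^ c := Cardinal.power_le_power_left (by positivity) (le_trans (le_max_right _ _) (le_max_left _ _))
  have h2 : c ^ c ≤ (2 ^ c) ^ c := by
    refine Cardinal.power_le_power_right ?_
    exact le_of_lt (Cardinal.cantor c)
  have h3 : ((2 : Cardinal) ^ c) ^ c = 2 ^ c := by
    rw [← Cardinal.power_mul, Cardinal.mul_eq_self (le_max_right _ _)]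
  calc a ^ b ≤ c ^ c := h1
    _ ≤ 2 ^ c := by rw [← h3]; exact h2
    _ < κ := two_power_lt hκ hX1 hX2 hcκ

end Ultra

end

end MitchellProof

namespace MitchellProof

noncomputable section

open Ordinal

variable {κ : Cardinal.{0}}

section Rank

variable {X : Ultrafilter κ.ord.ToType} {r : (κ.ord.ToType → Ordinal.{0}) → Ordinal.{0}}

lemma rank_le_of_ae (hr : IsUltrapowerRank X r) {f g : κ.ord.ToType → Ordinal.{0}}
    (h : {i | f i ≤ g i} ∈ X) : r f ≤ r g := by
  by_contra hc
  push_neg at hc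
  have h2 : {i | g i < f i} ∈ X := (hr.1 g f).1 hc
  have h3 : ({i | f i ≤ g i} ∩ {i | g i < f i} : Set _) ∈ X := Filter.inter_mem h h2
  obtain ⟨i, hi1, hi2⟩ := Ultrafilter.nonempty_of_mem h3
  simp only [Set.mem_setOf_eq] at hi1 hi2
  exact absurd hi1 (not_le.2 hi2)

lemma rank_eq_of_ae (hr : IsUltrapowerRank X r) {f g : κ.ord.ToType → Ordinal.{0}}
    (h : {i | f i = g i} ∈ X) : r f = r g := by
  refine le_antisymm (rank_le_of_ae hr (Filter.mem_of_superset h fun i hi => le_of_eq hi))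
    (rank_le_of_ae hr (Filter.mem_of_superset h fun i hi => ge_of_eq hi))

lemma ae_eq_of_rank_eq (hr : IsUltrapowerRank X r) {f g : κ.ord.ToType → Ordinal.{0}}
    (h : r f = r g) : {i | f i = g i} ∈ X := by
  have h1 : {i | f i < g i} ∉ X := fun hh => absurd ((hr.1 f g).2 hh) (by rw [h]; exact lt_irrefl _)
  have h2 : {i | g i < f i} ∉ X := fun hh => absurd ((hr.1 g f).2 hh) (by rw [h]; exact lt_irrefl _)
  have h3 : ({i | f i < g i} ∪ {i | g i < f i} : Set _) ∉ X := by
    intro hh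
    rcases (Ultrafilter.union_mem_iff).1 hh with h | h
    exacts [h1 h, h2 h]
  have h4 := (Ultrafilter.compl_mem_iff_notMem).2 h3
  refine Filter.mem_of_superset h4 ?_
  intro i hi
  simp only [Set.mem_compl_iff, Set.mem_union, Set.mem_setOf_eq, not_or, not_lt] at hi
  exact le_antisymm hi.2 hi.1

lemma ae_le_of_rank_le (hr : IsUltrapowerRank X r) {f g : κ.ord.ToType → Ordinal.{0}}
    (h : r f ≤ r g) : {i | f i ≤ g i} ∈ X := by
  have h2 : {i | g i < f i} ∉ X := fun hh => absurd ((hr.1 g f).2 hh) (not_lt.2 h)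
  have h4 := (Ultrafilter.compl_mem_iff_notMem).2 h2
  refine Filter.mem_of_superset h4 ?_
  intro i hi
  simpa [not_lt] using hi

/-- The restriction of the ultrapower embedding to ordinals. -/
def jj (r : (κ.ord.ToType → Ordinal.{0}) → Ordinal.{0}) (ξ : Ordinal.{0}) : Ordinal.{0} :=
  r (fun _ => ξ)

lemma jj_strictMono (hr : IsUltrapowerRank X r) : StrictMono (jj r) := by
  intro a b hab
  have heq : {i : κ.ord.ToType | (fun _ => a) i < (fun _ => b) i} = Set.univ := by
    ext i; simpa using hab
  exact (hr.1 _ _).2 (heq ▸ Filter.univ_mem)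

lemma le_jj (hr : IsUltrapowerRank X r) (ξ : Ordinal.{0}) : ξ ≤ jj r ξ :=
  (jj_strictMono hr).le_apply

lemma rank_surj (hr : IsUltrapowerRank X r) (ξ : Ordinal.{0}) : ∃ g, r g = ξ := by
  have h : ξ < jj r (ξ + 1) :=
    lt_of_le_of_lt (le_jj hr ξ) (jj_strictMono hr (Order.lt_succ ξ))
  exact hr.2 (fun _ => ξ + 1) ξ h

/-- A canonical representative for each ordinal. -/
def rep (hr : IsUltrapowerRank X r) (ξ : Ordinal.{0}) : κ.ord.ToType → Ordinal.{0} :=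
  Classical.choose (rank_surj hr ξ)

lemma rank_rep (hr : IsUltrapowerRank X r) (ξ : Ordinal.{0}) : r (rep hr ξ) = ξ :=
  Classical.choose_spec (rank_surj hr ξ)

lemma jj_fixed (hκ : ℵ₀ < κ) (hX1 : NonPrincipal X) (hX2 : UltraComplete X κ)
    (hr : IsUltrapowerRank X r) : ∀ ξ < κ.ord, jj r ξ = ξ := by
  intro ξ
  induction ξ using Ordinal.induction with
  | _ ξ IH =>
    intro hξ
    refine le_antisymm ?_ (le_jj hr ξ)
    by_contra hc
    push_neg at hc
    have hlt : ξ < r (fun _ => ξ) := hc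
    obtain ⟨g, hg⟩ := hr.2 _ _ hlt
    have hmem : {i | g i < ξ} ∈ X := (hr.1 g (fun _ => ξ)).1 (by rw [hg]; exact hlt)
    have hcover : {i | g i < ξ} = ⋃ z : ξ.ToType,
        {i | g i = (((Ordinal.ToType.mk (o := ξ))).symm z : Ordinal)} := by
      ext i
      simp only [Set.mem_setOf_eq, Set.mem_iUnion]
      constructor
      · intro h
        exact ⟨(Ordinal.ToType.mk (o := ξ)) ⟨g i, h⟩, by rw [OrderIso.symm_apply_apply]⟩
      · rintro ⟨z, hz⟩
        rw [hz]
        exact (((Ordinal.ToType.mk (o := ξ))).symm z).2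
    rw [hcover] at hmem
    obtain ⟨z, hz⟩ := exists_mem_of_iUnion_mem hX1 hX2 _
      (by rw [Cardinal.mk_toType]; exact Cardinal.lt_ord.1 hξ) hmem
    set ζ : Ordinal := (((Ordinal.ToType.mk (o := ξ))).symm z : Ordinal) with hζ
    have hζlt : ζ < ξ := (((Ordinal.ToType.mk (o := ξ))).symm z).2
    have : r g = jj r ζ := rank_eq_of_ae hr hz
    rw [hg, IH ζ hζlt (hζlt.trans hξ)] at this
    exact absurd this.symm (ne_of_lt hζlt)

/-- Functions of small rank are a.e. constant. -/
lemma ae_const (hκ : ℵ₀ < κ) (hX1 : NonPrincipal X) (hX2 : UltraComplete X κ)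
    (hr : IsUltrapowerRank X r) {h : κ.ord.ToType → Ordinal.{0}} (hh : r h < κ.ord) :
    {i | h i = r h} ∈ X := by
  have : r h = jj r (r h) := (jj_fixed hκ hX1 hX2 hr _ hh).symm
  exact ae_eq_of_rank_eq hr this

end Rank

end

end MitchellProof

namespace MitchellProof

noncomputable section

open Ordinal

variable {κ : Cardinal.{0}}

section WSide

variable {W : Ultrafilter κ.ord.ToType} {rW : (κ.ord.ToType → Ordinal.{0}) → Ordinal.{0}}

lemma jj_kappa_gt (hκ : ℵ₀ < κ) (hW1 : NonPrincipal W) (hW2 : UltraComplete W κ)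
    (hrW : IsUltrapowerRank W rW) : κ.ord < jj rW κ.ord := by
  have hlim : Order.IsSuccLimit κ.ord := Cardinal.isSuccLimit_ord (le_of_lt hκ)
  have h1 : ∀ ξ < κ.ord, ξ < rW (v κ) := by
    intro ξ hξ
    have hsucc : ξ + 1 < κ.ord := hlim.succ_lt hξ
    have htail : {i | (fun _ => ξ) i < v κ i} ∈ W := by
      refine Filter.mem_of_superset (tail_mem hW1 hW2 hsucc) ?_
      intro i hi
      simp only [Set.mem_setOf_eq] at hi ⊢
      rw [Ordinal.add_one_eq_succ, Order.succ_le_iff] at hi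
      exact hi
    have := (hrW.1 (fun _ => ξ) (v κ)).2 htail
    calc ξ ≤ jj rW ξ := le_jj hrW ξ
      _ < rW (v κ) := this
  have h2 : rW (v κ) < jj rW κ.ord := by
    refine (hrW.1 _ _).2 ?_
    have : {i | v κ i < κ.ord} = Set.univ := by
      ext i; simpa using v_lt i
    exact this ▸ Filter.univ_mem
  have h3 : κ.ord ≤ rW (v κ) := by
    refine le_of_forall_lt ?_
    intro c hc
    exact h1 c hc
  exact lt_of_le_of_lt h3 h2

variable (k : κ.ord.ToType → Ordinal.{0})

lemma k_lt_ae (hκ : ℵ₀ < κ) (hW1 : NonPrincipal W) (hW2 : UltraComplete W κ)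
    (hrW : IsUltrapowerRank W rW) (hk : rW k = κ.ord) :
    {i | k i < κ.ord} ∈ W := by
  by_contra hc
  have h2 : {i | κ.ord ≤ k i} ∈ W := by
    have := (Ultrafilter.compl_mem_iff_notMem).2 hc
    refine Filter.mem_of_superset this ?_
    intro i hi
    simpa [not_lt] using hi
  have : jj rW κ.ord ≤ rW k := rank_le_of_ae hrW
    (Filter.mem_of_superset h2 (fun i hi => hi))
  rw [hk] at this
  exact absurd this (not_le.2 (jj_kappa_gt hκ hW1 hW2 hrW))

/-- The diagonal intersection lemma along `k`. -/
lemma diag (hκ : ℵ₀ < κ) (hW1 : NonPrincipal W) (hW2 : UltraComplete W κ)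
    (hrW : IsUltrapowerRank W rW) (hk : rW k = κ.ord)
    (D : κ.ord.ToType → Set κ.ord.ToType) (hD : ∀ x, D x ∈ W) :
    {i | ∀ x, v κ x < k i → i ∈ D x} ∈ W := by
  by_contra hc
  classical
  set E := {i | ∀ x, v κ x < k i → i ∈ D x} with hE
  have hEc : Eᶜ ∈ W := (Ultrafilter.compl_mem_iff_notMem).2 hc
  have hex : ∀ i ∈ Eᶜ, ∃ x, v κ x < k i ∧ i ∉ D x := by
    intro i hi
    simp only [hE, Set.mem_compl_iff, Set.mem_setOf_eq, not_forall] at hi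
    obtain ⟨x, hx1, hx2⟩ := hi
    exact ⟨x, hx1, hx2⟩
  set hfun : κ.ord.ToType → Ordinal.{0} := fun i =>
    if hi : ∃ x, v κ x < k i ∧ i ∉ D x then v κ (Classical.choose hi) else 0 with hhfun
  have hltk : {i | hfun i < k i} ∈ W := by
    refine Filter.mem_of_superset hEc ?_
    intro i hi
    have he : ∃ x, v κ x < k i ∧ i ∉ D x := hex i hi
    simp only [Set.mem_setOf_eq, hhfun, dif_pos he]
    exact (Classical.choose_spec he).1
  have hrlt : rW hfun < κ.ord := by
    rw [← hk]
    exact (hrW.1 _ _).2 hltk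
  obtain ⟨x₀, hx₀⟩ := v_surj hrlt
  have hconst : {i | hfun i = rW hfun} ∈ W := ae_const hκ hW1 hW2 hrW hrlt
  have hmem : (Eᶜ ∩ {i | hfun i = rW hfun} ∩ D x₀ : Set _) ∈ W :=
    Filter.inter_mem (Filter.inter_mem hEc hconst) (hD x₀)
  obtain ⟨i, ⟨hi1, hi2⟩, hi3⟩ := Ultrafilter.nonempty_of_mem hmem
  have he : ∃ x, v κ x < k i ∧ i ∉ D x := hex i hi1
  have : v κ (Classical.choose he) = v κ x₀ := by
    have h5 : hfun i = v κ (Classical.choose he) := by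
      simp only [hhfun, dif_pos he]
    simp only [Set.mem_setOf_eq] at hi2
    rw [← h5, hi2, hx₀]
  have hxeq : Classical.choose he = x₀ := v_inj this
  exact (Classical.choose_spec he).2 (hxeq ▸ hi3)

/-- Countable sups stay below `j_W(κ)`. -/
lemma ctble_sup_lt_jjW (hκ : ℵ₀ < κ) (hW1 : NonPrincipal W) (hW2 : UltraComplete W κ)
    (hrW : IsUltrapowerRank W rW) (s : ℕ → Ordinal.{0})
    (hs : ∀ n, s n < jj rW κ.ord) : (⨆ n, s n) < jj rW κ.ord := by
  classical
  set g0 : ℕ → κ.ord.ToType → Ordinal.{0} := fun n => rep hrW (s n) with hg0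
  set g : ℕ → κ.ord.ToType → Ordinal.{0} := fun n i =>
    if g0 n i < κ.ord then g0 n i else 0 with hg
  have hgval : ∀ n, rW (g n) = s n := by
    intro n
    have hae : {i | g0 n i < κ.ord} ∈ W := by
      have : rW (g0 n) < rW (fun _ => κ.ord) := by
        rw [hg0]; simp only
        rw [rank_rep hrW]
        exact hs n
      exact (hrW.1 _ _).1 this
    have : rW (g n) = rW (g0 n) := by
      refine rank_eq_of_ae hrW ?_
      refine Filter.mem_of_superset hae ?_
      intro i hi
      simp only [Set.mem_setOf_eq] at hi ⊢
      show (if g0 n i < κ.ord then g0 n i else 0) = g0 n i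
      rw [if_pos hi]
    rw [this, hg0, rank_rep hrW]
  have hglt : ∀ n i, g n i < κ.ord := by
    intro n i
    show (if g0 n i < κ.ord then g0 n i else 0) < κ.ord
    split
    · assumption
    · exact (Cardinal.isSuccLimit_ord (le_of_lt hκ)).pos
  set G : κ.ord.ToType → Ordinal.{0} := fun i => ⨆ n, (g n i + 1) with hG
  have hGlt : ∀ i, G i < κ.ord := by
    intro i
    refine sup_lt_kappa hW1 hW2 _ (by rw [Cardinal.mk_denumerable]; exact hκ) ?_
    intro n
    have h1 : g n i < κ.ord := hglt n i
    have : Order.IsSuccLimit κ.ord := Cardinal.isSuccLimit_ord (le_of_lt hκ)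
    exact this.succ_lt h1
  have hGbig : ∀ n, rW (g n) < rW G := by
    intro n
    refine (hrW.1 _ _).2 ?_
    have : {i | g n i < G i} = Set.univ := by
      ext i
      simp only [Set.mem_setOf_eq, Set.mem_univ, iff_true]
      have h1 : g n i + 1 ≤ G i := le_ciSup (Ordinal.bddAbove_range _) n
      exact lt_of_lt_of_le (Order.lt_succ _) (by rwa [← Ordinal.add_one_eq_succ])
    exact this ▸ Filter.univ_mem
  have hGsmall : rW G < jj rW κ.ord := by
    refine (hrW.1 _ _).2 ?_
    have : {i | G i < κ.ord} = Set.univ := by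
      ext i; simpa using hGlt i
    exact this ▸ Filter.univ_mem
  refine lt_of_le_of_lt ?_ hGsmall
  refine ciSup_le ?_
  intro n
  rw [← hgval n]
  exact le_of_lt (hGbig n)

end WSide

section USide

variable {U : Ultrafilter κ.ord.ToType} {rU : (κ.ord.ToType → Ordinal.{0}) → Ordinal.{0}}

/-- Continuity of `j_U` at countable sups. -/
lemma jj_ctble_sup_le (hκ : ℵ₀ < κ) (hU1 : NonPrincipal U) (hU2 : UltraComplete U κ)
    (hrU : IsUltrapowerRank U rU) (s : ℕ → Ordinal.{0}) :
    jj rU (⨆ n, s n) ≤ ⨆ n, jj rU (s n) := by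
  refine le_of_forall_lt ?_
  intro c hc
  obtain ⟨g, hg⟩ := hrU.2 _ _ hc
  have hmem : {i | g i < ⨆ n, s n} ∈ U := (hrU.1 _ _).1 (by rw [hg]; exact hc)
  have hcover : {i | g i < ⨆ n, s n} = ⋃ n, {i | g i < s n} := by
    ext i
    simp only [Set.mem_setOf_eq, Set.mem_iUnion]
    exact Ordinal.lt_iSup_iff
  rw [hcover] at hmem
  obtain ⟨n, hn⟩ := exists_mem_of_iUnion_mem hU1 hU2 _
    (by rw [Cardinal.mk_denumerable]; exact hκ) hmem
  have : rU g < jj rU (s n) := (hrU.1 _ _).2 hn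
  rw [hg] at this
  exact lt_of_lt_of_le this (le_ciSup (Ordinal.bddAbove_range _) n)

/-- Representatives with values below `ξ + 1`. -/
lemma exists_small_rep (hrU : IsUltrapowerRank U rU) {ξ γ : Ordinal.{0}}
    (hγ : γ < jj rU ξ) :
    ∃ g : κ.ord.ToType → Ordinal.{0}, rU g = γ ∧ ∀ i, g i < ξ + 1 := by
  classical
  obtain ⟨g0, hg0⟩ := hrU.2 (fun _ => ξ) γ hγ
  have hmem : {i | g0 i < ξ} ∈ U := (hrU.1 _ _).1 (by rw [hg0]; exact hγ)
  refine ⟨fun i => if g0 i < ξ then g0 i else 0, ?_, ?_⟩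
  · rw [← hg0]
    refine rank_eq_of_ae hrU ?_
    refine Filter.mem_of_superset hmem ?_
    intro i hi
    simp only [Set.mem_setOf_eq] at hi ⊢
    rw [if_pos hi]
  · intro i
    show (if g0 i < ξ then g0 i else 0) < ξ + 1
    split
    · exact lt_trans (by assumption) (by rw [Ordinal.add_one_eq_succ]; exact Order.lt_succ ξ)
    · rw [Ordinal.add_one_eq_succ]
      exact lt_of_le_of_lt (zero_le (a := ξ)) (Order.lt_succ ξ)

/-- `j` maps ordinals below `(2^κ)⁺` below `(2^κ)⁺`. -/
lemma jj_lt_delta (hκ : ℵ₀ < κ) (hrU : IsUltrapowerRank U rU)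
    {ξ : Ordinal.{0}} (hξ : ξ < (Order.succ ((2 : Cardinal.{0}) ^ κ)).ord) :
    jj rU ξ < (Order.succ ((2 : Cardinal.{0}) ^ κ)).ord := by
  classical
  rw [Cardinal.lt_ord] at hξ ⊢
  have hξcard : ξ.card ≤ 2 ^ κ := Order.lt_succ_iff.1 hξ
  rw [Order.lt_succ_iff]
  set o := jj rU ξ with ho
  have hcard : o.card ≤ #(κ.ord.ToType → (ξ + 1).ToType) := by
    rw [← Cardinal.mk_toType]
    refine Cardinal.mk_le_of_injective (f := fun e => ?_) ?_
    · intro i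
      have hγlt : (((Ordinal.ToType.mk (o := o))).symm e : Ordinal) < o :=
        (((Ordinal.ToType.mk (o := o))).symm e).2
      exact (Ordinal.ToType.mk (o := (ξ + 1)))
        ⟨Classical.choose (exists_small_rep hrU hγlt) i,
         (Classical.choose_spec (exists_small_rep hrU hγlt)).2 i⟩
    · intro e1 e2 h12
      simp only at h12
      have hγ1 : (((Ordinal.ToType.mk (o := o))).symm e1 : Ordinal) < o :=
        (((Ordinal.ToType.mk (o := o))).symm e1).2
      have hγ2 : (((Ordinal.ToType.mk (o := o))).symm e2 : Ordinal) < o :=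
        (((Ordinal.ToType.mk (o := o))).symm e2).2
      have hfun : Classical.choose (exists_small_rep hrU hγ1) =
          Classical.choose (exists_small_rep hrU hγ2) := by
        funext i
        have := congrFun h12 i
        have h3 := ((Ordinal.ToType.mk (o := (ξ + 1)))).injective this
        exact Subtype.mk_eq_mk.1 h3
      have hr1 := (Classical.choose_spec (exists_small_rep hrU hγ1)).1
      have hr2 := (Classical.choose_spec (exists_small_rep hrU hγ2)).1
      rw [hfun, hr2] at hr1
      have : ((Ordinal.ToType.mk (o := o))).symm e1 = ((Ordinal.ToType.mk (o := o))).symm e2 :=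
        Subtype.ext hr1.symm
      exact ((Ordinal.ToType.mk (o := o))).symm.injective this
  refine le_trans hcard ?_
  rw [Cardinal.mk_arrow, Cardinal.lift_id, Cardinal.lift_id, Cardinal.mk_toType,
    Cardinal.mk_toType, Cardinal.card_ord]
  have h1 : (ξ + 1).card ≤ 2 ^ κ := by
    rw [Ordinal.card_add, Ordinal.card_one]
    have h2κ : ℵ₀ ≤ (2 : Cardinal.{0}) ^ κ :=
      le_trans (le_of_lt hκ) (le_of_lt (Cardinal.cantor κ))
    calc ξ.card + 1 ≤ 2 ^ κ + 1 := by
          exact add_le_add_left hξcard 1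
      _ = 2 ^ κ := by
          rw [Cardinal.add_one_eq h2κ]
  calc (ξ + 1).card ^ κ ≤ ((2 : Cardinal.{0}) ^ κ) ^ κ :=
        Cardinal.power_le_power_right h1
    _ = 2 ^ (κ * κ) := by rw [← Cardinal.power_mul]
    _ = 2 ^ κ := by rw [Cardinal.mul_eq_self (le_of_lt hκ)]

end USide

end

end MitchellProof

namespace MitchellProof

noncomputable section

open Ordinal

section AccRank

variable {α : Type} (r : α → α → Prop)

/-- The relation induced on the accessible part. -/
def accSubRel : {a : α // Acc r a} → {a : α // Acc r a} → Prop :=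
  fun x y => r x.1 y.1

lemma accSubRel_wf : WellFounded (accSubRel r) := by
  constructor
  rintro ⟨a, ha⟩
  induction ha with
  | intro x hx ih =>
    exact ⟨_, fun ⟨y, hy⟩ hrel => ih y hrel⟩

/-- Rank on the accessible part. -/
def rkW : {a : α // Acc r a} → Ordinal.{0} :=
  (accSubRel_wf r).fix fun a ih => ⨆ z : {z // accSubRel r z a}, Order.succ (ih z.1 z.2)

lemma rkW_eq (a : {a : α // Acc r a}) :
    rkW r a = ⨆ z : {z // accSubRel r z a}, Order.succ (rkW r z.1) := by
  rw [rkW, WellFounded.fix_eq]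

/-- Rank of a point, zero on the non-accessible part. -/
def rho (a : α) : Ordinal.{0} :=
  @dite _ (Acc r a) (Classical.dec _) (fun h => rkW r ⟨a, h⟩) (fun _ => 0)

lemma rho_pos_eq {a : α} (h : Acc r a) : rho r a = rkW r ⟨a, h⟩ := dif_pos h

lemma rho_neg_eq {a : α} (h : ¬Acc r a) : rho r a = 0 := dif_neg h

lemma rkW_lt {a b : {a : α // Acc r a}} (h : accSubRel r a b) : rkW r a < rkW r b := by
  conv_rhs => rw [rkW_eq]
  have : Order.succ (rkW r a) ≤ ⨆ z : {z // accSubRel r z b}, Order.succ (rkW r z.1) :=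
    le_ciSup (f := fun z : {z // accSubRel r z b} => Order.succ (rkW r z.1))
      (Ordinal.bddAbove_range _) ⟨a, h⟩
  exact lt_of_lt_of_le (Order.lt_succ _) this

lemma rho_lt {p q : α} (hp : Acc r p) (h : r q p) : rho r q < rho r p := by
  have hq : Acc r q := hp.inv h
  rw [rho_pos_eq r hp, rho_pos_eq r hq]
  exact rkW_lt r (show accSubRel r ⟨q, hq⟩ ⟨p, hp⟩ from h)

lemma rkW_le_of_preds {a b : {a : α // Acc r a}} (h : ∀ z : α, r z a.1 → r z b.1) :
    rkW r a ≤ rkW r b := by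
  rw [rkW_eq]
  refine ciSup_le' ?_
  rintro ⟨z, hz⟩
  exact Order.succ_le_of_lt (rkW_lt r (a := z) (h z.1 hz))

lemma acc_congr {a b : α} (h : ∀ z, r z a → r z b) (hb : Acc r b) : Acc r a :=
  Acc.intro a fun z hz => hb.inv (h z hz)

lemma rho_congr {a b : α} (h : ∀ z, r z a ↔ r z b) : rho r a = rho r b := by
  by_cases hb : Acc r b
  · have ha : Acc r a := acc_congr r (fun z hz => (h z).1 hz) hb
    rw [rho_pos_eq r ha, rho_pos_eq r hb]
    exact le_antisymm (rkW_le_of_preds r (fun z hz => (h z).1 hz))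
      (rkW_le_of_preds r (fun z hz => (h z).2 hz))
  · have ha : ¬Acc r a := fun ha => hb (acc_congr r (fun z hz => (h z).2 hz) ha)
    rw [rho_neg_eq r ha, rho_neg_eq r hb]

lemma rho_surj {a : α} (ha : Acc r a) {γ : Ordinal.{0}} (hγ : γ < rho r a) :
    ∃ b : α, Acc r b ∧ rho r b = γ := by
  suffices H : ∀ a' : {a : α // Acc r a}, ∀ γ < rkW r a', ∃ b : {a : α // Acc r a},
      rkW r b = γ by
    rw [rho_pos_eq r ha] at hγ
    obtain ⟨b, hb⟩ := H ⟨a, ha⟩ γ hγ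
    exact ⟨b.1, b.2, by rw [rho_pos_eq r b.2]; exact hb⟩
  intro a'
  induction a' using (accSubRel_wf r).induction with
  | _ a' IH =>
    intro γ hγ
    rw [rkW_eq] at hγ
    obtain ⟨z, hz⟩ := Ordinal.lt_iSup_iff.1 hγ
    rcases (Order.lt_succ_iff.1 hz).lt_or_eq with h | h
    · exact IH z.1 z.2 γ h
    · exact ⟨z.1, h.symm⟩

lemma not_acc_exists {a : α} (h : ¬Acc r a) : ∃ z, r z a ∧ ¬Acc r z := by
  by_contra hc
  push_neg at hc
  exact h (Acc.intro a fun z hz => hc z hz)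

/-- If the relation factors through a map `θ`, ranks are bounded by the size of
the target. -/
lemma rho_card_le {τ : Type} (θ : α → τ)
    (hθ : ∀ a b : α, θ a = θ b → ∀ z, (r z a ↔ r z b)) (a : α) :
    (rho r a).card ≤ #τ := by
  classical
  rw [← Cardinal.mk_toType]
  by_cases ha : Acc r a
  · have hlt : ∀ e : (rho r a).ToType,
        (((Ordinal.ToType.mk (o := (rho r a)))).symm e : Ordinal) < rho r a :=
      fun e => (((Ordinal.ToType.mk (o := (rho r a)))).symm e).2
    refine Cardinal.mk_le_of_injective
      (f := fun e => θ (Classical.choose (rho_surj r ha (hlt e)))) ?_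
    intro e1 e2 h12
    simp only at h12
    have h1 := Classical.choose_spec (rho_surj r ha (hlt e1))
    have h2 := Classical.choose_spec (rho_surj r ha (hlt e2))
    have heq : rho r (Classical.choose (rho_surj r ha (hlt e1))) =
        rho r (Classical.choose (rho_surj r ha (hlt e2))) :=
      rho_congr r (hθ _ _ h12)
    rw [h1.2, h2.2] at heq
    have := Subtype.ext (p := fun o => o ∈ Set.Iio (rho r a)) heq
    exact ((Ordinal.ToType.mk (o := (rho r a)))).symm.injective this
  · rw [rho_neg_eq r ha]
    simp

end AccRank

end

end MitchellProof

namespace MitchellProof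

noncomputable section

open Ordinal

variable {κ : Cardinal.{0}} {U W : Ultrafilter κ.ord.ToType}
  {rU rW : (κ.ord.ToType → Ordinal.{0}) → Ordinal.{0}}

/-- The normalized representative of `β` modulo `W`. -/
def bb (hrW : IsUltrapowerRank W rW) (hκ : ℵ₀ < κ) (β : Ordinal.{0}) :
    κ.ord.ToType → Ordinal.{0} :=
  fun i => if rep hrW β i < κ.ord then rep hrW β i else 0

lemma bb_lt (hrW : IsUltrapowerRank W rW) (hκ : ℵ₀ < κ) (β : Ordinal.{0}) (i : κ.ord.ToType) :
    bb hrW hκ β i < κ.ord := by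
  rw [bb]
  split
  · assumption
  · exact (Cardinal.isSuccLimit_ord (le_of_lt hκ)).pos

lemma rW_bb (hrW : IsUltrapowerRank W rW) (hκ : ℵ₀ < κ) {β : Ordinal.{0}}
    (hβ : β < jj rW κ.ord) : rW (bb hrW hκ β) = β := by
  have hae : {i | rep hrW β i < κ.ord} ∈ W := by
    have : rW (rep hrW β) < rW (fun _ => κ.ord) := by
      rw [rank_rep hrW]; exact hβ
    exact (hrW.1 _ _).1 this
  have : rW (bb hrW hκ β) = rW (rep hrW β) := by
    refine rank_eq_of_ae hrW ?_
    refine Filter.mem_of_superset hae ?_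
    intro i hi
    simp only [Set.mem_setOf_eq] at hi ⊢
    rw [bb, if_pos hi]
  rw [this, rank_rep hrW]

/-- The truncated local value function. -/
def mloc (hrW : IsUltrapowerRank W rW) (hκ : ℵ₀ < κ) (β : Ordinal.{0}) (i : κ.ord.ToType)
    (p : κ.ord.ToType → κ.ord.ToType) : κ.ord.ToType → Ordinal.{0} :=
  fun x => min (v κ (p x)) (bb hrW hκ β i)

/-- Trace of a set below `k i`. -/
def trSeg (k : κ.ord.ToType → Ordinal.{0}) (i : κ.ord.ToType) (A : Set κ.ord.ToType) :
    Set κ.ord.ToType :=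
  {x | x ∈ A ∧ ordVal κ x < k i}

/-- The local comparison relation. -/
def Rl (hrW : IsUltrapowerRank W rW) (hκ : ℵ₀ < κ) (β : Ordinal.{0})
    (k : κ.ord.ToType → Ordinal.{0}) (F : κ.ord.ToType → Set (Set κ.ord.ToType))
    (i : κ.ord.ToType) (q p : κ.ord.ToType → κ.ord.ToType) : Prop :=
  trSeg k i {x | mloc hrW hκ β i q x < mloc hrW hκ β i p x} ∈ F i

/-- The global value function of a family. -/
def glob (rW : (κ.ord.ToType → Ordinal.{0}) → Ordinal.{0})
    (p : κ.ord.ToType → κ.ord.ToType → κ.ord.ToType) : κ.ord.ToType → Ordinal.{0} :=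
  fun x => rW (fun i => v κ (p i x))

/-- The capped global value function. -/
def gc (rW : (κ.ord.ToType → Ordinal.{0}) → Ordinal.{0}) (β : Ordinal.{0})
    (p : κ.ord.ToType → κ.ord.ToType → κ.ord.ToType) : κ.ord.ToType → Ordinal.{0} :=
  fun x => min (glob rW p x) β

lemma rW_min (hrW : IsUltrapowerRank W rW) (hκ : ℵ₀ < κ) {β : Ordinal.{0}}
    (hβ : β < jj rW κ.ord) (f : κ.ord.ToType → Ordinal.{0}) :
    rW (fun i => min (f i) (bb hrW hκ β i)) = min (rW f) β := by
  rcases lt_or_ge (rW f) β with h | h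
  · have hae : {i | f i < bb hrW hκ β i} ∈ W := by
      refine (hrW.1 _ _).1 ?_
      rw [rW_bb hrW hκ hβ]; exact h
    have heq : rW (fun i => min (f i) (bb hrW hκ β i)) = rW f := by
      refine rank_eq_of_ae hrW ?_
      refine Filter.mem_of_superset hae ?_
      intro i hi
      simp only [Set.mem_setOf_eq] at hi ⊢
      exact min_eq_left (le_of_lt hi)
    rw [heq, min_eq_left (le_of_lt h)]
  · have hnot : {i | f i < bb hrW hκ β i} ∉ W := by
      intro hmem
      have : rW f < rW (bb hrW hκ β) := (hrW.1 _ _).2 hmem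
      rw [rW_bb hrW hκ hβ] at this
      exact absurd h (not_le.2 this)
    have hae : {i | bb hrW hκ β i ≤ f i} ∈ W := by
      have := (Ultrafilter.compl_mem_iff_notMem).2 hnot
      refine Filter.mem_of_superset this ?_
      intro i hi
      simpa [not_lt] using hi
    have heq : rW (fun i => min (f i) (bb hrW hκ β i)) = rW (bb hrW hκ β) := by
      refine rank_eq_of_ae hrW ?_
      refine Filter.mem_of_superset hae ?_
      intro i hi
      simp only [Set.mem_setOf_eq] at hi ⊢
      exact min_eq_right hi
    rw [heq, rW_bb hrW hκ hβ, min_eq_right h]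

lemma gc_eq (hrW : IsUltrapowerRank W rW) (hκ : ℵ₀ < κ) {β : Ordinal.{0}}
    (hβ : β < jj rW κ.ord) (p : κ.ord.ToType → κ.ord.ToType → κ.ord.ToType)
    (x : κ.ord.ToType) :
    gc rW β p x = rW (fun i => mloc hrW hκ β i (p i) x) := by
  rw [gc, glob]
  exact (rW_min hrW hκ hβ (fun i => v κ (p i x))).symm

lemma mem_congr_W {S S' E : Set κ.ord.ToType} (hE : E ∈ W)
    (h : ∀ i ∈ E, (i ∈ S ↔ i ∈ S')) : S ∈ W ↔ S' ∈ W := by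
  constructor
  · intro hS
    refine Filter.mem_of_superset (Filter.inter_mem hS hE) ?_
    rintro i ⟨hi1, hi2⟩
    exact (h i hi2).1 hi1
  · intro hS
    refine Filter.mem_of_superset (Filter.inter_mem hS hE) ?_
    rintro i ⟨hi1, hi2⟩
    exact (h i hi2).2 hi1

section Core

variable (hκ : ℵ₀ < κ) (hW1 : NonPrincipal W) (hW2 : UltraComplete W κ)
  (hrW : IsUltrapowerRank W rW)
  (k : κ.ord.ToType → Ordinal.{0}) (F : κ.ord.ToType → Set (Set κ.ord.ToType))
  (hk : rW k = κ.ord)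
  (hF : ∀ A : Set κ.ord.ToType, (A ∈ U ↔ {i | trSeg k i A ∈ F i} ∈ W))
  {β : Ordinal.{0}} (hβ : β < jj rW κ.ord)

include hW1 hW2 hk hβ hF in
/-- The fundamental transfer lemma. -/
lemma transfer (p q : κ.ord.ToType → κ.ord.ToType → κ.ord.ToType) :
    {x | gc rW β q x < gc rW β p x} ∈ U ↔
      {i | Rl hrW hκ β k F i (q i) (p i)} ∈ W := by
  classical
  set A := {x | gc rW β q x < gc rW β p x} with hA
  set D : κ.ord.ToType → Set κ.ord.ToType := fun x =>
    if x ∈ A then {i | mloc hrW hκ β i (q i) x < mloc hrW hκ β i (p i) x}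
    else {i | mloc hrW hκ β i (p i) x ≤ mloc hrW hκ β i (q i) x} with hD
  have hDmem : ∀ x, D x ∈ W := by
    intro x
    simp only [hD]
    by_cases hx : x ∈ A
    · rw [if_pos hx]
      refine (hrW.1 _ _).1 ?_
      rw [← gc_eq hrW hκ hβ q x, ← gc_eq hrW hκ hβ p x]
      exact hx
    · rw [if_neg hx]
      refine ae_le_of_rank_le hrW ?_
      rw [← gc_eq hrW hκ hβ q x, ← gc_eq hrW hκ hβ p x]
      simp only [hA, Set.mem_setOf_eq, not_lt] at hx
      exact hx
  have hE : {i | ∀ x, v κ x < k i → i ∈ D x} ∈ W := diag k hκ hW1 hW2 hrW hk D hDmem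
  have key : ∀ i ∈ {i | ∀ x, v κ x < k i → i ∈ D x},
      trSeg k i {x | mloc hrW hκ β i (q i) x < mloc hrW hκ β i (p i) x} = trSeg k i A := by
    intro i hi
    ext x
    simp only [trSeg, Set.mem_setOf_eq]
    constructor
    · rintro ⟨hm, hv⟩
      refine ⟨?_, hv⟩
      by_contra hx
      have := hi x hv
      simp only [hD] at this
      rw [if_neg hx] at this
      exact absurd hm (not_lt.2 this)
    · rintro ⟨hxA, hv⟩
      have := hi x hv
      simp only [hD] at this
      rw [if_pos hxA] at this
      exact ⟨this, hv⟩
  have h2 : {i | Rl hrW hκ β k F i (q i) (p i)} ∈ W ↔ {i | trSeg k i A ∈ F i} ∈ W := by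
    refine mem_congr_W hE ?_
    intro i hi
    show Rl hrW hκ β k F i (q i) (p i) ↔ trSeg k i A ∈ F i
    rw [Rl, key i hi]
  rw [hF A, h2]

end Core

end

end MitchellProof

namespace MitchellProof

noncomputable section

open Ordinal

variable {κ : Cardinal.{0}} {U W : Ultrafilter κ.ord.ToType}
  {rU rW : (κ.ord.ToType → Ordinal.{0}) → Ordinal.{0}}

section Core2

variable (hκ : ℵ₀ < κ)
  (hU1 : NonPrincipal U) (hU2 : UltraComplete U κ) (hrU : IsUltrapowerRank U rU)
  (hW1 : NonPrincipal W) (hW2 : UltraComplete W κ) (hrW : IsUltrapowerRank W rW)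
  (k : κ.ord.ToType → Ordinal.{0}) (F : κ.ord.ToType → Set (Set κ.ord.ToType))
  (hk : rW k = κ.ord)
  (hF : ∀ A : Set κ.ord.ToType, (A ∈ U ↔ {i | trSeg k i A ∈ F i} ∈ W))
  {β : Ordinal.{0}} (hβ : β < jj rW κ.ord)

include hκ hU1 hU2 hrU hW1 hW2 hrW hk hF hβ in
/-- a.e. accessibility of families under the local relations. -/
lemma acc_ae (p : κ.ord.ToType → κ.ord.ToType → κ.ord.ToType) :
    {i | Acc (Rl hrW hκ β k F i) (p i)} ∈ W := by
  classical
  suffices H : ∀ γ (p : κ.ord.ToType → κ.ord.ToType → κ.ord.ToType),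
      rU (gc rW β p) = γ → {i | Acc (Rl hrW hκ β k F i) (p i)} ∈ W from H _ p rfl
  intro γ
  induction γ using Ordinal.induction with
  | _ γ IH =>
    intro p hp
    by_contra hc
    have hI : {i | ¬Acc (Rl hrW hκ β k F i) (p i)} ∈ W := by
      have : {i | Acc (Rl hrW hκ β k F i) (p i)}ᶜ ∈ W :=
        (Ultrafilter.compl_mem_iff_notMem).2 hc
      refine Filter.mem_of_superset this ?_
      intro i hi
      exact hi
    set q : κ.ord.ToType → κ.ord.ToType → κ.ord.ToType := fun i =>
      if h : ∃ z, Rl hrW hκ β k F i z (p i) ∧ ¬Acc (Rl hrW hκ β k F i) z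
      then Classical.choose h else p i with hqdef
    have hq : ∀ i ∈ {i | ¬Acc (Rl hrW hκ β k F i) (p i)},
        Rl hrW hκ β k F i (q i) (p i) ∧ ¬Acc (Rl hrW hκ β k F i) (q i) := by
      intro i hi
      have hex := not_acc_exists (Rl hrW hκ β k F i) hi
      simp only [hqdef, dif_pos hex]
      exact Classical.choose_spec hex
    have hrel : {i | Rl hrW hκ β k F i (q i) (p i)} ∈ W :=
      Filter.mem_of_superset hI (fun i hi => (hq i hi).1)
    have hA : {x | gc rW β q x < gc rW β p x} ∈ U :=
      (transfer hκ hW1 hW2 hrW k F hk hF hβ p q).2 hrel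
    have hlt : rU (gc rW β q) < γ := by
      rw [← hp]
      exact (hrU.1 _ _).2 hA
    have hacc := IH _ hlt q rfl
    have hboth : ({i | Acc (Rl hrW hκ β k F i) (q i)} ∩
        {i | ¬Acc (Rl hrW hκ β k F i) (p i)} : Set _) ∈ W := Filter.inter_mem hacc hI
    obtain ⟨i, hi1, hi2⟩ := Ultrafilter.nonempty_of_mem hboth
    exact (hq i hi2).2 hi1

include hκ hU1 hU2 hrU hW1 hW2 hrW hk hF hβ in
/-- The rank comparison lemma. -/
lemma rank_le_rho (p : κ.ord.ToType → κ.ord.ToType → κ.ord.ToType) :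
    rU (gc rW β p) ≤ rW (fun i => rho (Rl hrW hκ β k F i) (p i)) := by
  classical
  suffices H : ∀ γ (p : κ.ord.ToType → κ.ord.ToType → κ.ord.ToType),
      rU (gc rW β p) = γ →
      rU (gc rW β p) ≤ rW (fun i => rho (Rl hrW hκ β k F i) (p i)) from H _ p rfl
  intro γ
  induction γ using Ordinal.induction with
  | _ γ IH =>
    intro p hp
    refine le_of_forall_lt ?_
    intro γ' hγ'
    obtain ⟨g₀, hg₀⟩ := hrU.2 (gc rW β p) γ' hγ'
    have hA₀ : {x | g₀ x < gc rW β p x} ∈ U := (hrU.1 _ _).1 (by rw [hg₀]; exact hγ')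
    set q : κ.ord.ToType → κ.ord.ToType → κ.ord.ToType := fun i x =>
      vInv κ (bb hrW hκ (min (g₀ x) β) i) (bb_lt hrW hκ _ i) with hqdef
    have hglob : ∀ x, glob rW q x = min (g₀ x) β := by
      intro x
      have h1 : (fun i => v κ (q i x)) = bb hrW hκ (min (g₀ x) β) := by
        funext i
        simp only [hqdef]
        exact v_vInv _ _
      rw [glob]
      show rW (fun i => v κ (q i x)) = min (g₀ x) β
      rw [h1]
      exact rW_bb hrW hκ (lt_of_le_of_lt (min_le_right _ _) hβ)
    have hgcq : ∀ x, gc rW β q x = min (g₀ x) β := by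
      intro x
      rw [gc, hglob x]
      rcases le_total (g₀ x) β with h | h
      · rw [min_eq_left h, min_eq_left h]
      · rw [min_eq_right h, min_self]
    have hsub : {x | g₀ x < gc rW β p x} ⊆ {x | gc rW β q x = g₀ x} := by
      intro x hx
      simp only [Set.mem_setOf_eq] at hx ⊢
      rw [hgcq x]
      have : g₀ x ≤ β := le_of_lt (lt_of_lt_of_le hx (min_le_right _ _))
      exact min_eq_left this
    have hq_rank : rU (gc rW β q) = γ' := by
      rw [← hg₀]
      exact rank_eq_of_ae hrU (Filter.mem_of_superset hA₀ hsub)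
    have hAq : {x | gc rW β q x < gc rW β p x} ∈ U := by
      refine Filter.mem_of_superset hA₀ ?_
      intro x hx
      simp only [Set.mem_setOf_eq] at hx ⊢
      rw [hsub hx]
      exact hx
    have hlt3 : rU (gc rW β q) < γ := by
      rw [← hp]
      exact (hrU.1 _ _).2 hAq
    have hIH := IH _ hlt3 q rfl
    rw [hq_rank] at hIH
    have hrel : {i | Rl hrW hκ β k F i (q i) (p i)} ∈ W :=
      (transfer hκ hW1 hW2 hrW k F hk hF hβ p q).1 hAq
    have hacc := acc_ae hκ hU1 hU2 hrU hW1 hW2 hrW k F hk hF hβ p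
    have hρ : {i | rho (Rl hrW hκ β k F i) (q i) < rho (Rl hrW hκ β k F i) (p i)} ∈ W := by
      refine Filter.mem_of_superset (Filter.inter_mem hrel hacc) ?_
      rintro i ⟨hi1, hi2⟩
      exact rho_lt _ hi2 hi1
    have : rW (fun i => rho (Rl hrW hκ β k F i) (q i)) <
        rW (fun i => rho (Rl hrW hκ β k F i) (p i)) := (hrW.1 _ _).2 hρ
    exact lt_of_le_of_lt hIH this

include hκ hW1 hW2 hrW in
/-- The counting bound: local ranks are small. -/
lemma rho_lt_kappa {i : κ.ord.ToType} (hki : k i < κ.ord)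
    (q : κ.ord.ToType → κ.ord.ToType) :
    rho (Rl hrW hκ β k F i) q < κ.ord := by
  classical
  rw [Cardinal.lt_ord]
  set B := (bb hrW hκ β i + 1).ToType with hB
  set S := {x : κ.ord.ToType // v κ x < k i} with hS
  have hmb : ∀ (a : κ.ord.ToType → κ.ord.ToType) (x : κ.ord.ToType),
      mloc hrW hκ β i a x < bb hrW hκ β i + 1 := by
    intro a x
    refine lt_of_le_of_lt (min_le_right _ _) ?_
    rw [Ordinal.add_one_eq_succ]
    exact Order.lt_succ _
  set θ : (κ.ord.ToType → κ.ord.ToType) → (S → B) := fun a x =>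
    (Ordinal.ToType.mk (o := _)) ⟨mloc hrW hκ β i a x.1, hmb a x.1⟩ with hθdef
  have hθ : ∀ a b : κ.ord.ToType → κ.ord.ToType, θ a = θ b →
      ∀ z, (Rl hrW hκ β k F i z a ↔ Rl hrW hκ β k F i z b) := by
    intro a b hab z
    have hm : ∀ x : κ.ord.ToType, v κ x < k i → mloc hrW hκ β i a x = mloc hrW hκ β i b x := by
      intro x hx
      have := congrFun hab ⟨x, hx⟩
      simp only [hθdef] at this
      have h2 := ((Ordinal.ToType.mk (o := _))).injective this
      exact Subtype.mk_eq_mk.1 h2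
    have hset : trSeg k i {x | mloc hrW hκ β i z x < mloc hrW hκ β i a x} =
        trSeg k i {x | mloc hrW hκ β i z x < mloc hrW hκ β i b x} := by
      ext x
      simp only [trSeg, Set.mem_setOf_eq]
      constructor
      · rintro ⟨h1, h2⟩
        exact ⟨by rwa [← hm x h2], h2⟩
      · rintro ⟨h1, h2⟩
        exact ⟨by rwa [hm x h2], h2⟩
    rw [Rl, Rl, hset]
  have hcard := rho_card_le (Rl hrW hκ β k F i) θ hθ q
  refine lt_of_le_of_lt hcard ?_
  have h1 : #(S → B) = #B ^ #S := by
    rw [Cardinal.mk_arrow, Cardinal.lift_id, Cardinal.lift_id]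
  rw [h1]
  have hBcard : #B < κ := by
    rw [hB, Cardinal.mk_toType, Ordinal.card_add, Ordinal.card_one]
    have hb : (bb hrW hκ β i).card < κ := Cardinal.lt_ord.1 (bb_lt hrW hκ β i)
    rcases lt_or_ge (bb hrW hκ β i).card ℵ₀ with h | h
    · exact lt_trans (Cardinal.add_lt_aleph0 h Cardinal.one_lt_aleph0) hκ
    · rw [Cardinal.add_one_eq h]
      exact hb
  have hScard : #S < κ := by
    have := card_seg_le (κ := κ) (k i)
    have h2 : #S ≤ (k i).card := this
    exact lt_of_le_of_lt h2 (Cardinal.lt_ord.1 hki)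
  exact power_lt hκ hW1 hW2 hBcard hScard

include hκ hU1 hU2 hrU hW1 hW2 hrW hk hF in
/-- P5: `j_U` maps ordinals below `j_W(κ)` below `j_W(κ)`. -/
lemma jjU_lt_jjW {β : Ordinal.{0}} (hβ : β < jj rW κ.ord) :
    jj rU β < jj rW κ.ord := by
  classical
  set p : κ.ord.ToType → κ.ord.ToType → κ.ord.ToType := fun i _ =>
    vInv κ (bb hrW hκ β i) (bb_lt hrW hκ β i) with hpdef
  have hgc : gc rW β p = fun _ => β := by
    funext x
    have h1 : (fun i => v κ (p i x)) = bb hrW hκ β := by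
      funext i
      simp only [hpdef]
      exact v_vInv _ _
    rw [gc, glob]
    show min (rW (fun i => v κ (p i x))) β = β
    rw [h1, rW_bb hrW hκ hβ, min_self]
  have h1 : jj rU β ≤ rW (fun i => rho (Rl hrW hκ β k F i) (p i)) := by
    have := rank_le_rho hκ hU1 hU2 hrU hW1 hW2 hrW k F hk hF hβ p
    rwa [hgc] at this
  have h2 : rW (fun i => rho (Rl hrW hκ β k F i) (p i)) < jj rW κ.ord := by
    refine (hrW.1 _ _).2 ?_
    refine Filter.mem_of_superset (k_lt_ae k hκ hW1 hW2 hrW hk) ?_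
    intro i hi
    simp only [Set.mem_setOf_eq] at hi ⊢
    exact rho_lt_kappa hκ hW1 hW2 hrW k F hi (p i)
  exact lt_of_le_of_lt h1 h2

end Core2

end

end MitchellProof

/-- Proposition 3.17: with `κ`, `U`, `j` as before, let `W` be a non-principal
`κ`-complete ultrafilter on `κ` with ultrapower embedding `j_W`, and suppose
`U ◁ W`, i.e. `U ∈ M_W`.  (Membership of `U` in the ultrapower `M_W` is expressed
via Łoś's theorem: there are `k` representing the ordinal `κ` in the `W`-ultrapower
and a function `F` such that a subset `A` of `κ` belongs to `U` exactly when the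
function `i ↦ A ∩ (k i)` is `W`-almost-everywhere in `F`.)  Then there is an
ordinal `α < (2 ^ κ)⁺` with `j_W α > α = j α`. -/
theorem mitchell_order_moves_fixed_point
    (κ : Cardinal.{0}) (U W : Ultrafilter κ.ord.ToType)
    (rU rW : (κ.ord.ToType → Ordinal.{0}) → Ordinal.{0})
    (hκ : ℵ₀ < κ)
    (hU1 : NonPrincipal U) (hU2 : UltraComplete U κ) (hrU : IsUltrapowerRank U rU)
    (hW1 : NonPrincipal W) (hW2 : UltraComplete W κ) (hrW : IsUltrapowerRank W rW)
    (hUW : ∃ k : κ.ord.ToType → Ordinal.{0}, rW k = κ.ord ∧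
      ∃ F : κ.ord.ToType → Set (Set κ.ord.ToType),
        ∀ A : Set κ.ord.ToType,
          (A ∈ U ↔ {i | {x | x ∈ A ∧ ordVal κ x < k i} ∈ F i} ∈ W)) :
    ∃ α : Ordinal.{0}, α < (Order.succ ((2 : Cardinal.{0}) ^ κ)).ord ∧
      rU (fun _ => α) = α ∧ α < rW (fun _ => α) := by
  classical
  obtain ⟨k, hk, F, hF⟩ := hUW
  have hF' : ∀ A : Set κ.ord.ToType,
      (A ∈ U ↔ {i | MitchellProof.trSeg k i A ∈ F i} ∈ W) := hF
  -- the iterates of j_U starting at κ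
  set a : ℕ → Ordinal.{0} := fun n => Nat.rec κ.ord (fun _ o => MitchellProof.jj rU o) n
    with ha
  have ha0 : a 0 = κ.ord := rfl
  have haS : ∀ n, a (n + 1) = MitchellProof.jj rU (a n) := fun n => rfl
  set α := ⨆ n, a n with hα
  have hjWκ : κ.ord < MitchellProof.jj rW κ.ord :=
    MitchellProof.jj_kappa_gt hκ hW1 hW2 hrW
  have han : ∀ n, a n < MitchellProof.jj rW κ.ord := by
    intro n
    induction n with
    | zero => exact hjWκ
    | succ n IH =>
      rw [haS]
      exact MitchellProof.jjU_lt_jjW hκ hU1 hU2 hrU hW1 hW2 hrW k F hk hF' IH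
  have hαlt : α < MitchellProof.jj rW κ.ord :=
    MitchellProof.ctble_sup_lt_jjW hκ hW1 hW2 hrW a han
  have hκα : κ.ord < α := by
    have h1 : κ.ord < a 1 := MitchellProof.jj_kappa_gt hκ hU1 hU2 hrU
    exact lt_of_lt_of_le h1 (le_ciSup (Ordinal.bddAbove_range _) 1)
  have hfix : rU (fun _ => α) = α := by
    refine le_antisymm ?_ (MitchellProof.le_jj hrU α)
    have h1 : MitchellProof.jj rU α ≤ ⨆ n, MitchellProof.jj rU (a n) :=
      MitchellProof.jj_ctble_sup_le hκ hU1 hU2 hrU a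
    refine le_trans h1 ?_
    refine ciSup_le ?_
    intro n
    rw [← haS]
    exact le_ciSup (Ordinal.bddAbove_range _) (n + 1)
  have hmove : α < rW (fun _ => α) := by
    have h1 : MitchellProof.jj rW κ.ord < MitchellProof.jj rW α :=
      MitchellProof.jj_strictMono hrW hκα
    exact lt_trans hαlt h1
  have hδ : α < (Order.succ ((2 : Cardinal.{0}) ^ κ)).ord := by
    have hreg : (Order.succ ((2 : Cardinal.{0}) ^ κ)).IsRegular := by
      have h2κ : ℵ₀ ≤ (2 : Cardinal.{0}) ^ κ :=
        le_trans (le_of_lt hκ) (le_of_lt (Cardinal.cantor κ))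
      exact Cardinal.isRegular_succ h2κ
    refine Ordinal.iSup_lt_ord ?_ ?_
    · rw [Cardinal.mk_denumerable, hreg.cof_eq]
      exact lt_of_le_of_lt (le_trans (le_of_lt hκ) (le_of_lt (Cardinal.cantor κ)))
        (Order.lt_succ _)
    · intro n
      induction n with
      | zero =>
        rw [ha0, Cardinal.lt_ord, Cardinal.card_ord]
        exact lt_of_le_of_lt (le_of_lt (Cardinal.cantor κ)) (Order.lt_succ _)
      | succ n IH =>
        rw [haS]
        exact MitchellProof.jj_lt_delta hκ hrU IH
  exact ⟨α, hδ, hfix, hmove⟩
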